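/- Let φ : (G,P) → (G',P') be a fibration of networks. Then the pullback map φ* : S(G',P') → S(G,P), defined by (φ*w')_a = Ctrl(φ_a)⁻¹(w'_{φ(a)}) where φ_a : I(a) → I(φ(a)) is the induced isomorphism of input trees, is linear and maps the subspace V(G',P') of groupoid-invariant virtual vector fields into V(G,P). -/

import Mathlib

open Manifold

structure DGraph where
  V : Type
  E : Type
  src : E → V
  tgt : E → V

/-- A map of directed multigraphs: functions on edges and vertices commuting with
source and target. -/
structure GraphMap (G G' : DGraph) where
  vmap : G.V → G'.V
  emap : G.E → G'.E
  src_eq : ∀ e, G'.src (emap e) = vmap (G.src e)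
  tgt_eq : ∀ e, G'.tgt (emap e) = vmap (G.tgt e)

/-- `φ` is a graph fibration if for every vertex `a` of `G` and every edge `e'` of `G'`
with target `φ(a)`, there is a unique edge `e` of `G` with target `a` and `φ(e) = e'`. -/
def GraphMap.IsFibration {G G' : DGraph} (φ : GraphMap G G') : Prop :=
  ∀ (a : G.V) (e' : G'.E), G'.tgt e' = φ.vmap a →
    ∃! e : G.E, G.tgt e = a ∧ φ.emap e = e'

/-- The set of edges of `G` with target `a`. -/
abbrev inEdges (G : DGraph) (a : G.V) : Type := {e : G.E // G.tgt e = a}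

/-- The input tree `I(a)` of a vertex `a`: its vertices are `{a} ⊔ t⁻¹(a)` (the root `a`
is encoded as `none`, the leaf `γ ∈ t⁻¹(a)` as `some γ`), its edges are the pairs `(a, γ)`
for `γ ∈ t⁻¹(a)`, with source `γ` and target the root `a`. -/
def inputTree (G : DGraph) (a : G.V) : DGraph where
  V := Option (inEdges G a)
  E := inEdges G a
  src := fun γ => some γ
  tgt := fun _ => none

/-- An isomorphism of graphs is a graph map bijective on vertices and on edges. -/
def GraphMap.IsIso {G G' : DGraph} (φ : GraphMap G G') : Prop :=
  Function.Bijective φ.vmap ∧ Function.Bijective φ.emap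


/-- An isomorphism of input networks `(I(a), P ∘ ξ_a) → (I(a'), P' ∘ ξ_{a'})`.
Since any isomorphism of height-1 trees sends root to root and is determined by its
action on the leaves (equivalently, on the edges), it is given by a bijection `e` of the
sets of incoming edges; the network (phase-preserving) condition says that the root
phases agree (`hr`) and the phases of corresponding leaves agree (`hl`). -/
structure InputIso {ι : Type} (G : DGraph) (P : G.V → ι) (G' : DGraph) (P' : G'.V → ι)
    (a : G.V) (a' : G'.V) where
  e : inEdges G a ≃ inEdges G' a'
  hr : P' a' = P a
  hl : ∀ γ : inEdges G a, P' (G'.src ((e γ) : inEdges G' a').1) = P (G.src γ.1)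

/-- The identity isomorphism of an input network. -/
def InputIso.refl {ι : Type} (G : DGraph) (P : G.V → ι) (a : G.V) :
    InputIso G P G P a a :=
  ⟨Equiv.refl _, rfl, fun _ => rfl⟩

/-- Composition of isomorphisms of input networks. -/
def InputIso.comp {ι : Type} {G : DGraph} {P : G.V → ι} {G' : DGraph} {P' : G'.V → ι}
    {G'' : DGraph} {P'' : G''.V → ι} {a : G.V} {a' : G'.V} {a'' : G''.V}
    (σ : InputIso G P G' P' a a') (σ' : InputIso G' P' G'' P'' a' a'') :
    InputIso G P G'' P'' a a'' :=
  ⟨σ.e.trans σ'.e, σ'.hr.trans σ.hr, fun γ => (σ'.hl (σ.e γ)).trans (σ.hl γ)⟩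

/-- The inverse of an isomorphism of input networks. -/
def InputIso.inv {ι : Type} {G : DGraph} {P : G.V → ι} {G' : DGraph} {P' : G'.V → ι}
    {a : G.V} {a' : G'.V} (σ : InputIso G P G' P' a a') : InputIso G' P' G P a' a :=
  ⟨σ.e.symm, σ.hr.symm, fun γ' => by
    have h := σ.hl (σ.e.symm γ')
    rw [Equiv.apply_symm_apply] at h
    exact h.symm⟩

variable {ι : Type} {EE : ι → Type} [∀ i, NormedAddCommGroup (EE i)]
  [∀ i, NormedSpace ℝ (EE i)] {HH : ι → Type} [∀ i, TopologicalSpace (HH i)]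
  (II : ∀ i, ModelWithCorners ℝ (EE i) (HH i))
  (MM : ι → Type) [∀ i, TopologicalSpace (MM i)] [∀ i, ChartedSpace (HH i) (MM i)]
  [∀ i, IsManifold (II i) ((⊤ : ℕ∞) : WithTop ℕ∞) (MM i)]

/-- The total phase space `P I(a) = P(a) × ⊓_{γ ∈ t⁻¹(a)} P(s(γ))` of the input network
of the vertex `a` of the network `(G, P)` (phase spaces drawn from the family of
manifolds `MM` via the index function `P : G.V → ι`). -/
abbrev PIn (G : DGraph) (P : G.V → ι) (a : G.V) : Type :=
  MM (P a) × ((γ : inEdges G a) → MM (P (G.src γ.1)))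

/-- The underlying (not necessarily smooth) sections of the control space
`Ctrl(P I(a) → P a)`: maps `F` from `P I(a)` to the tangent bundle of `P a = P(a)` with
`F q ∈ T_{p(q)} P(a)`, where `p : P I(a) → P(a)` is the projection onto the root factor. -/
abbrev Raw (G : DGraph) (P : G.V → ι) (a : G.V) : Type :=
  (q : PIn MM G P a) → TangentSpace (II (P a)) q.1

/-- The model with corners for the manifold `P I(a)`. -/
noncomputable def PInModel (G : DGraph) [Fintype G.E] [DecidableEq G.V]
    (P : G.V → ι) (a : G.V) :
    ModelWithCorners ℝ (EE (P a) × ((γ : inEdges G a) → EE (P (G.src γ.1))))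
      (ModelProd (HH (P a)) (ModelPi fun γ : inEdges G a => HH (P (G.src γ.1)))) :=
  (II (P a)).prod (ModelWithCorners.pi fun γ : inEdges G a => II (P (G.src γ.1)))

/-- Smoothness of an element of `Ctrl(P I(a) → P a)`, as a map into the tangent bundle.
`Ctrl(P I(a) → P a)` is the vector space of smooth maps `F : P I(a) → T P(a)` with
`F q ∈ T_{p(q)} P(a)`, i.e. the subspace of smooth elements of `Raw`. -/
def IsSmoothCtrl (G : DGraph) [Fintype G.E] [DecidableEq G.V] (P : G.V → ι) (a : G.V)
    (F : Raw II MM G P a) : Prop :=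
  ContMDiff (PInModel II G P a) (II (P a)).tangent (⊤ : ℕ∞)
    (fun q => Bundle.TotalSpace.mk q.1 (F q) :
      PIn MM G P a → TangentBundle (II (P a)) (MM (P a)))

/-- The map `P φ : P I(a') → P I(a)` of total phase spaces of input networks induced
(contravariantly) by an isomorphism `φ` of input networks. -/
def phaseIn {G : DGraph} {P : G.V → ι} {G' : DGraph} {P' : G'.V → ι} {a : G.V}
    {a' : G'.V} (σ : InputIso G P G' P' a a') : PIn MM G' P' a' → PIn MM G P a :=
  fun q => (cast (congrArg MM σ.hr) q.1,
    fun γ => cast (congrArg MM (σ.hl γ)) (q.2 (σ.e γ)))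

/-- Transport of tangent vectors along an equality of phase space indices; this is the
differential of the induced diffeomorphism of phase spaces (a `cast`). -/
def tcast {i j : ι} (h : i = j) {x : MM i} {y : MM j} (v : TangentSpace (II i) x) :
    TangentSpace (II j) y :=
  cast (congrArg EE h) v

/-- The map `Ctrl(φ) : Ctrl(P I(a) → P a) → Ctrl(P I(a') → P a')`,
`Ctrl(φ)(F) = D(P(φ|ₐ))⁻¹ ∘ F ∘ P φ`, induced by an isomorphism `φ` of input networks:
here `P(φ|ₐ) : P(a') → P(a)` is the diffeomorphism (a `cast`) induced by the restriction
of `φ` to the root, and its differential is `tcast`. -/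
def ctrlMap {G : DGraph} {P : G.V → ι} {G' : DGraph} {P' : G'.V → ι} {a : G.V}
    {a' : G'.V} (σ : InputIso G P G' P' a a') :
    Raw II MM G P a → Raw II MM G' P' a' :=
  fun F q' => tcast II MM σ.hr.symm (F (phaseIn MM σ q'))

/-- A virtual vector field on the network `(G, P)`, i.e. a section of the control bundle,
is smooth if each of its components is a smooth control system. -/
def IsSmoothSec (G : DGraph) [Fintype G.E] [DecidableEq G.V] (P : G.V → ι)
    (w : ∀ a, Raw II MM G P a) : Prop :=
  ∀ a, IsSmoothCtrl II MM G P a (w a)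

/-- A virtual vector field `w` on `(G, P)` is invariant under the symmetry groupoid if
`Ctrl(σ) (w a) = w b` for every isomorphism `σ : (I(a), P∘ξ_a) → (I(b), P∘ξ_b)` of input
networks.  Together with smoothness this cuts out `V(G,P) ⊆ S(G,P)`. -/
def IsInvariantSec (G : DGraph) (P : G.V → ι) (w : ∀ a, Raw II MM G P a) : Prop :=
  ∀ (a b : G.V) (σ : InputIso G P G P a b), ctrlMap II MM σ (w a) = w b

/-- The isomorphism of input networks `φ_a : (I(a), P∘ξ_a) → (I(φ(a)), P'∘ξ_{φ(a)})`
induced by a fibration of networks `φ : (G,P) → (G',P')`. -/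
noncomputable def fibIso {G G' : DGraph} (φ : GraphMap G G') (hφ : φ.IsFibration)
    {P : G.V → ι} {P' : G'.V → ι} (h : ∀ a, P' (φ.vmap a) = P a) (a : G.V) :
    InputIso G P G' P' a (φ.vmap a) where
  e :=
    { toFun := fun γ => ⟨φ.emap γ.1, by rw [φ.tgt_eq, γ.2]⟩
      invFun := fun γ' => ⟨Exists.choose (hφ a γ'.1 γ'.2),
        (Exists.choose_spec (hφ a γ'.1 γ'.2)).1.1⟩
      left_inv := fun γ => Subtype.ext
        (((Exists.choose_spec (hφ a (φ.emap γ.1) (by rw [φ.tgt_eq, γ.2]))).2 γ.1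
          ⟨γ.2, rfl⟩).symm)
      right_inv := fun γ' => Subtype.ext
        (Exists.choose_spec (hφ a γ'.1 γ'.2)).1.2 }
  hr := h a
  hl := fun γ => by
    show P' (G'.src (φ.emap γ.1)) = P (G.src γ.1)
    rw [φ.src_eq]; exact h _

/-- The pullback map `φ* : S(G',P') → S(G,P)` of virtual vector fields along a fibration
of networks `φ`, defined by `(φ* w')_a = Ctrl(φ_a)⁻¹ (w'_{φ(a)})`. -/
noncomputable def pullbackVF {G G' : DGraph} (φ : GraphMap G G') (hφ : φ.IsFibration)
    {P : G.V → ι} {P' : G'.V → ι} (h : ∀ a, P' (φ.vmap a) = P a)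
    (w' : ∀ a', Raw II MM G' P' a') : ∀ a, Raw II MM G P a :=
  fun a => ctrlMap II MM (fibIso φ hφ h a).inv (w' (φ.vmap a))


/-! ### Auxiliary lemmas -/

section PiLemmas

variable {κ : Type} [Fintype κ] {F : Type} [NormedAddCommGroup F] [NormedSpace ℝ F]
  {K : Type} [TopologicalSpace K] {J : ModelWithCorners ℝ F K} {N : Type}
  [TopologicalSpace N] [ChartedSpace K N]
  {E : κ → Type} [∀ k, NormedAddCommGroup (E k)] [∀ k, NormedSpace ℝ (E k)]
  {H : κ → Type} [∀ k, TopologicalSpace (H k)] {I : ∀ k, ModelWithCorners ℝ (E k) (H k)}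
  {M : κ → Type} [∀ k, TopologicalSpace (M k)] [∀ k, ChartedSpace (H k) (M k)]

theorem contMDiff_pi_of_comp {f : N → ∀ k, M k}
    (hf : ∀ k, ContMDiff J (I k) (⊤ : ℕ∞) fun x => f x k) :
    ContMDiff J (ModelWithCorners.pi I) (⊤ : ℕ∞) f := by
  intro x
  have hx : ∀ k, ContMDiffAt J (I k) (⊤ : ℕ∞) (fun x => f x k) x := fun k => (hf k) x
  refine (contMDiffAt_iff.2 ⟨?_, ?_⟩ : ContMDiffAt J (ModelWithCorners.pi I) (⊤ : ℕ∞) f x)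
  · exact continuousAt_pi.2 fun k => (hx k).continuousAt
  · exact contDiffWithinAt_pi.2 fun k => (contMDiffAt_iff.1 (hx k)).2

theorem contMDiff_eval_pi (k : κ) :
    ContMDiff (ModelWithCorners.pi I) (I k) (⊤ : ℕ∞) (fun f : ∀ k, M k => f k) := by
  intro p
  refine (contMDiffAt_iff.2 ⟨(continuous_apply k).continuousAt, ?_⟩ :
    ContMDiffAt (ModelWithCorners.pi I) (I k) (⊤ : ℕ∞) (fun f : ∀ k, M k => f k) p)
  refine ContDiffWithinAt.congr_of_eventuallyEq
    (f := fun y : ∀ k, E k => y k) ?_ ?_ ?_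
  · exact ((ContinuousLinearMap.proj k : (∀ k, E k) →L[ℝ] E k).contDiff).contDiffWithinAt
  · refine Filter.eventuallyEq_of_mem (extChartAt_target_mem_nhdsWithin p) ?_
    intro y hy
    exact congrFun ((extChartAt (ModelWithCorners.pi I) p).right_inv hy) k
  · exact congrFun ((extChartAt (ModelWithCorners.pi I) p).right_inv
      ((extChartAt (ModelWithCorners.pi I) p).map_source (mem_extChartAt_source p))) k

end PiLemmas

/-- Cast of points between diffeomorphic (equal-index) phase spaces. -/
def castMap {i j : ι} (h : i = j) : MM i → MM j := fun x => cast (congrArg MM h) x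

theorem castMap_contMDiff {i j : ι} (h : i = j) :
    ContMDiff (II i) (II j) (⊤ : ℕ∞) (castMap MM h) := by
  subst h; exact contMDiff_id

/-- Cast of tangent bundles between equal-index phase spaces. -/
def bundleCast {i j : ι} (h : i = j) :
    TangentBundle (II i) (MM i) → TangentBundle (II j) (MM j) :=
  fun z => ⟨cast (congrArg MM h) z.1, cast (congrArg EE h) z.2⟩

theorem bundleCast_contMDiff {i j : ι} (h : i = j) :
    ContMDiff (II i).tangent (II j).tangent (⊤ : ℕ∞) (bundleCast II MM h) := by
  subst h; exact contMDiff_id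

theorem bundleCast_cast {i j : ι} (h : i = j) (x : MM j)
    (v : TangentSpace (II i) (cast (congrArg MM h.symm) x)) :
    bundleCast II MM h ⟨cast (congrArg MM h.symm) x, v⟩
      = ⟨x, cast (congrArg EE h) v⟩ := by
  subst h; rfl

theorem cast_app {T : Type} {f : T → Type} {δ γ : T} (hδ : δ = γ) (h : f δ = f γ)
    (q2 : ∀ t, f t) : cast h (q2 δ) = q2 γ := by
  subst hδ; exact eq_of_heq (cast_heq _ _)

theorem phaseIn_contMDiff {G : DGraph} [Fintype G.E] [DecidableEq G.V]
    {G' : DGraph} [Fintype G'.E] [DecidableEq G'.V]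
    {P : G.V → ι} {P' : G'.V → ι} {a : G.V} {a' : G'.V}
    (σ : InputIso G P G' P' a a') :
    ContMDiff (PInModel II G' P' a') (PInModel II G P a) (⊤ : ℕ∞) (phaseIn MM σ) := by
  unfold PInModel
  refine ContMDiff.prodMk ?_ ?_
  · exact (castMap_contMDiff II MM σ.hr).comp contMDiff_fst
  · refine contMDiff_pi_of_comp fun γ => ?_
    exact (castMap_contMDiff II MM (σ.hl γ)).comp
      ((contMDiff_eval_pi (σ.e γ)).comp contMDiff_snd)

theorem ctrlMap_smooth {G : DGraph} [Fintype G.E] [DecidableEq G.V]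
    {G' : DGraph} [Fintype G'.E] [DecidableEq G'.V]
    {P : G.V → ι} {P' : G'.V → ι} {a : G.V} {a' : G'.V}
    (σ : InputIso G P G' P' a a') {F : Raw II MM G P a}
    (hF : IsSmoothCtrl II MM G P a F) :
    IsSmoothCtrl II MM G' P' a' (ctrlMap II MM σ F) := by
  have key : (fun q => Bundle.TotalSpace.mk q.1 (ctrlMap II MM σ F q) :
      PIn MM G' P' a' → TangentBundle (II (P' a')) (MM (P' a')))
      = (bundleCast II MM σ.hr.symm) ∘
        (fun q => Bundle.TotalSpace.mk q.1 (F q) :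
          PIn MM G P a → TangentBundle (II (P a)) (MM (P a))) ∘ phaseIn MM σ := by
    funext q
    exact (bundleCast_cast II MM σ.hr.symm q.1 (F (phaseIn MM σ q))).symm
  unfold IsSmoothCtrl
  rw [key]
  exact ((bundleCast_contMDiff II MM σ.hr.symm).comp hF).comp (phaseIn_contMDiff II MM σ)

theorem cast_F_congr {A : Type} {B : A → Type} {C : Type} (F : ∀ z, B z) {x y : A}
    (hxy : x = y) (h1 : B x = C) (h2 : B y = C) : cast h1 (F x) = cast h2 (F y) := by
  subst hxy; rfl

theorem phaseIn_comp {G : DGraph} {P : G.V → ι} {G' : DGraph} {P' : G'.V → ι}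
    {G'' : DGraph} {P'' : G''.V → ι} {a : G.V} {a' : G'.V} {a'' : G''.V}
    (σ : InputIso G P G' P' a a') (σ' : InputIso G' P' G'' P'' a' a'') :
    phaseIn MM (σ.comp σ') = phaseIn MM σ ∘ phaseIn MM σ' := by
  funext q
  simp only [phaseIn, InputIso.comp, Function.comp, cast_cast, Equiv.trans_apply]

theorem ctrlMap_comp {G : DGraph} {P : G.V → ι} {G' : DGraph} {P' : G'.V → ι}
    {G'' : DGraph} {P'' : G''.V → ι} {a : G.V} {a' : G'.V} {a'' : G''.V}
    (σ : InputIso G P G' P' a a') (σ' : InputIso G' P' G'' P'' a' a'')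
    (F : Raw II MM G P a) :
    ctrlMap II MM (σ.comp σ') F = ctrlMap II MM σ' (ctrlMap II MM σ F) := by
  funext q
  simp only [ctrlMap, tcast, cast_cast]
  exact eq_of_heq ((cast_heq _ _).trans (HEq.trans
    (congr_arg_heq F (congrFun (phaseIn_comp MM σ σ') q))
    ((cast_heq _ _).trans (cast_heq _ _)).symm))

theorem phaseIn_inv_cancel {G : DGraph} {P : G.V → ι} {G' : DGraph} {P' : G'.V → ι}
    {a : G.V} {a' : G'.V} (σ : InputIso G P G' P' a a') (q : PIn MM G P a) :
    phaseIn MM σ (phaseIn MM σ.inv q) = q := by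
  refine Prod.ext ?_ ?_
  · show cast _ (cast _ q.1) = q.1
    rw [cast_cast]; exact eq_of_heq (cast_heq _ _)
  · funext γ
    show cast _ (cast _ (q.2 (σ.e.symm (σ.e γ)))) = q.2 γ
    exact eq_of_heq ((cast_heq _ _).trans ((cast_heq _ _).trans
      (congr_arg_heq q.2 (σ.e.symm_apply_apply γ))))

theorem ctrlMap_inv_cancel {G : DGraph} {P : G.V → ι} {G' : DGraph} {P' : G'.V → ι}
    {a : G.V} {a' : G'.V} (σ : InputIso G P G' P' a a') (F : Raw II MM G P a) :
    ctrlMap II MM σ.inv (ctrlMap II MM σ F) = F := by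
  funext q
  show tcast II MM _ (tcast II MM _ (F (phaseIn MM σ (phaseIn MM σ.inv q)))) = F q
  rw [phaseIn_inv_cancel]
  show cast _ (cast _ (F q)) = F q
  exact eq_of_heq ((cast_heq _ _).trans (cast_heq _ _))

theorem tcast_add {i j : ι} (h : i = j) {x : MM i} {y : MM j}
    (v w : TangentSpace (II i) x) :
    (tcast II MM h (v + w) : TangentSpace (II j) y)
      = tcast II MM h v + tcast II MM h w := by
  subst h; rfl

theorem tcast_smul {i j : ι} (h : i = j) {x : MM i} {y : MM j} (c : ℝ)
    (v : TangentSpace (II i) x) :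
    (tcast II MM h (c • v) : TangentSpace (II j) y) = c • tcast II MM h v := by
  subst h; rfl

/-- **Pullback along a fibration preserves invariant virtual vector fields.**
For a fibration of networks `φ : (G,P) → (G',P')`, the pullback map
`φ* : S(G',P') → S(G,P)`, `(φ* w')_a = Ctrl(φ_a)⁻¹ (w'_{φ(a)})`, is linear (additive and
homogeneous, and maps smooth sections to smooth sections), and it maps the subspace
`V(G',P')` of groupoid-invariant virtual vector fields into `V(G,P)`. -/
theorem pullback_linear_preserves_invariant
    {G G' : DGraph} [Fintype G.E] [DecidableEq G.V] [Fintype G'.E] [DecidableEq G'.V]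
    (φ : GraphMap G G') (hφ : φ.IsFibration)
    {P : G.V → ι} {P' : G'.V → ι} (h : ∀ a, P' (φ.vmap a) = P a) :
    (∀ w₁ w₂ : ∀ a', Raw II MM G' P' a',
      pullbackVF II MM φ hφ h (w₁ + w₂) =
        pullbackVF II MM φ hφ h w₁ + pullbackVF II MM φ hφ h w₂) ∧
    (∀ (c : ℝ) (w' : ∀ a', Raw II MM G' P' a'),
      pullbackVF II MM φ hφ h (c • w') = c • pullbackVF II MM φ hφ h w') ∧
    (∀ w' : ∀ a', Raw II MM G' P' a',
      IsSmoothSec II MM G' P' w' → IsSmoothSec II MM G P (pullbackVF II MM φ hφ h w')) ∧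
    (∀ w' : ∀ a', Raw II MM G' P' a',
      IsSmoothSec II MM G' P' w' → IsInvariantSec II MM G' P' w' →
        IsInvariantSec II MM G P (pullbackVF II MM φ hφ h w')) := by
  refine ⟨?_, ?_, ?_, ?_⟩
  · intro w₁ w₂
    funext a q
    exact tcast_add II MM ((fibIso φ hφ h a).inv.hr.symm) _ _
  · intro c w'
    funext a q
    exact tcast_smul II MM ((fibIso φ hφ h a).inv.hr.symm) _ _
  · intro w' hw' a
    exact ctrlMap_smooth II MM _ (hw' (φ.vmap a))
  · intro w' _ hinv a b σ
    have key := hinv (φ.vmap a) (φ.vmap b)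
      (((fibIso φ hφ h a).inv.comp σ).comp (fibIso φ hφ h b))
    show ctrlMap II MM σ (ctrlMap II MM (fibIso φ hφ h a).inv (w' (φ.vmap a)))
      = ctrlMap II MM (fibIso φ hφ h b).inv (w' (φ.vmap b))
    rw [← key, ctrlMap_comp, ctrlMap_comp, ctrlMap_inv_cancel]
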